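/- arXiv:math/0303064 — 3 statements merged into one kernel-verified Lean document; each statement's English description precedes it below -/
import Mathlib

section
/- Suppose for every n and every family of vectors u₁,…,u_r ∈ ℝ^n with |u_j|_∞ ≤ 1 there exist signs ε_j ∈ {−1,+1} with |Σ_j ε_j u_j|_∞ ≤ C₃ (r log(2n/r))^{1/2}. Then for any finite set K ⊆ {1,…,n} with |K| = r and a trigonometric polynomial Σ_{k∈K} A_k with A_k(x) = d_k cos(kx + φ_k), there exist signs σ_k = ±1 (k ∈ K) such that ‖Σ_{k∈K} σ_k A_k‖_∞ ≤ 3C₃ (r log((20n+2)/r))^{1/2} max_k |d_k| and |Σ_{k∈K} σ_k| ≤ C₃ (r log((20n+2)/r))^{1/2}. -/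
open Finset Complex

noncomputable def Dker (b : ℕ) (t : ℝ) : ℂ :=
  ∑ j ∈ Finset.range b, Complex.exp (j * t * Complex.I)

lemma expsum (L : ℕ) (hL : 0 < L) (m : ℤ) :
    ∑ l ∈ Finset.range L, Complex.exp (m * (2 * Real.pi * l / L) * Complex.I)
      = if (L : ℤ) ∣ m then (L : ℂ) else 0 := by
  have hLC : (L : ℂ) ≠ 0 := by exact_mod_cast hL.ne'
  set z : ℂ := Complex.exp (m * (2 * Real.pi / L) * Complex.I) with hz
  have hterm : ∀ l ∈ Finset.range L,
      Complex.exp (m * (2 * Real.pi * l / L) * Complex.I) = z ^ l := by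
    intro l _
    rw [hz, ← Complex.exp_nat_mul]
    congr 1
    field_simp
  rw [Finset.sum_congr rfl hterm]
  by_cases hdvd : (L : ℤ) ∣ m
  · obtain ⟨c, hc⟩ := hdvd
    have hz1 : z = 1 := by
      rw [hz, hc]
      rw [show ((((L : ℤ) * c : ℤ) : ℂ)) * (2 * Real.pi / L) * Complex.I
            = c * (2 * Real.pi * Complex.I) by push_cast; field_simp]
      exact Complex.exp_int_mul_two_pi_mul_I c
    simp [hz1, hc]
  · have hz1 : z ≠ 1 := by
      intro h
      rw [hz, Complex.exp_eq_one_iff] at h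
      obtain ⟨c, hc⟩ := h
      apply hdvd
      refine ⟨c, ?_⟩
      have hI : (Complex.I : ℂ) ≠ 0 := Complex.I_ne_zero
      have hpi : (Real.pi : ℂ) ≠ 0 := by exact_mod_cast Real.pi_ne_zero
      have key : (m : ℂ) * (2 * Real.pi * Complex.I)
          = ((L * c : ℤ) : ℂ) * (2 * Real.pi * Complex.I) := by
        push_cast
        field_simp at hc
        linear_combination (2 * Real.pi * Complex.I) * hc
      have : (m : ℂ) = ((L * c : ℤ) : ℂ) :=
        mul_right_cancel₀ (by simp [hpi, hI]) key
      exact_mod_cast this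
    have hzL : z ^ L = 1 := by
      rw [hz, ← Complex.exp_nat_mul,
        show (L:ℂ) * ((m:ℂ) * (2*Real.pi/L) * Complex.I) = m * (2*Real.pi*Complex.I) by
          field_simp]
      exact Complex.exp_int_mul_two_pi_mul_I m
    rw [geom_sum_eq hz1, hzL]
    simp [hdvd]

lemma normSq_Dker (b : ℕ) (t : ℝ) :
    ((Complex.normSq (Dker b t) : ℝ) : ℂ)
      = ∑ j ∈ Finset.range b, ∑ j' ∈ Finset.range b,
          Complex.exp ((((j:ℝ) - j') * t) * Complex.I) := by
  rw [← Complex.mul_conj]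
  unfold Dker
  rw [map_sum, Finset.sum_mul_sum]
  refine Finset.sum_congr rfl fun j _ => Finset.sum_congr rfl fun j' _ => ?_
  rw [← Complex.exp_conj, ← Complex.exp_add]
  congr 1
  have : (starRingEnd ℂ) ((j':ℂ) * (t:ℂ) * Complex.I) = -((j':ℂ) * t * Complex.I) := by
    simp [map_mul, Complex.conj_I, Complex.conj_ofReal]
  rw [this]
  push_cast
  ring

lemma gridsum (L b k : ℕ) (hL : 0 < L) (hbk : k + b ≤ L) (x : ℝ) :
    ∑ l ∈ Finset.range L,
      ((Complex.normSq (Dker b (x - 2 * Real.pi * l / L)) : ℝ) : ℂ)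
        * Complex.exp (((k : ℝ) * (2 * Real.pi * l / L)) * Complex.I)
      = ((b - k : ℕ) : ℂ) * L * Complex.exp (((k : ℝ) * x) * Complex.I) := by
  have step1 : ∀ l ∈ Finset.range L,
      ((Complex.normSq (Dker b (x - 2 * Real.pi * l / L)) : ℝ) : ℂ)
        * Complex.exp (((k : ℝ) * (2 * Real.pi * l / L)) * Complex.I)
      = ∑ j ∈ Finset.range b, ∑ j' ∈ Finset.range b,
          Complex.exp ((((j:ℝ) - j') * x) * Complex.I)
            * Complex.exp ((((k:ℤ) - j + j' : ℤ) : ℂ) * (2 * Real.pi * l / L) * Complex.I) := by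
    intro l _
    rw [normSq_Dker, Finset.sum_mul]
    refine Finset.sum_congr rfl fun j _ => ?_
    rw [Finset.sum_mul]
    refine Finset.sum_congr rfl fun j' _ => ?_
    rw [← Complex.exp_add, ← Complex.exp_add]
    congr 1
    push_cast
    ring
  rw [Finset.sum_congr rfl step1]
  rw [Finset.sum_comm]
  have step2 : ∀ j ∈ Finset.range b,
      ∑ l ∈ Finset.range L, ∑ j' ∈ Finset.range b,
          Complex.exp ((((j:ℝ) - j') * x) * Complex.I)
            * Complex.exp ((((k:ℤ) - j + j' : ℤ) : ℂ) * (2 * Real.pi * l / L) * Complex.I)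
      = ∑ j' ∈ Finset.range b,
          Complex.exp ((((j:ℝ) - j') * x) * Complex.I)
            * (if (L:ℤ) ∣ ((k:ℤ) - j + j') then (L:ℂ) else 0) := by
    intro j _
    rw [Finset.sum_comm]
    refine Finset.sum_congr rfl fun j' _ => ?_
    rw [← Finset.mul_sum, expsum L hL ((k:ℤ) - j + j')]
  rw [Finset.sum_congr rfl step2]
  have step3 : ∀ j ∈ Finset.range b, ∀ j' ∈ Finset.range b,
      Complex.exp ((((j:ℝ) - j') * x) * Complex.I)
          * (if (L:ℤ) ∣ ((k:ℤ) - j + j') then (L:ℂ) else 0)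
      = if j = j' + k then (L:ℂ) * Complex.exp (((k : ℝ) * x) * Complex.I) else 0 := by
    intro j hj j' hj'
    rw [Finset.mem_range] at hj hj'
    have hiff : ((L:ℤ) ∣ ((k:ℤ) - j + j')) ↔ (j = j' + k) := by
      constructor
      · rintro ⟨c, hc⟩
        have hc0 : c = 0 := by
          rcases lt_trichotomy c 0 with h | h | h
          · nlinarith [hc, (show (L:ℤ) * c ≤ -L by nlinarith)]
          · exact h
          · nlinarith [hc, (show (L:ℤ) ≤ L * c by nlinarith)]
        subst hc0
        simp only [mul_zero] at hc
        omega
      · intro h; exact ⟨0, by omega⟩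
    rw [if_congr hiff rfl rfl, mul_ite, mul_zero]
    split_ifs with h
    · subst h
      rw [mul_comm]
      congr 2
      push_cast
      ring
    · rfl
  rw [Finset.sum_congr rfl fun j hj => Finset.sum_congr rfl fun j' hj' => step3 j hj j' hj']
  rw [Finset.sum_comm]
  have step4 : ∀ j' ∈ Finset.range b,
      (∑ j ∈ Finset.range b,
        if j = j' + k then (L:ℂ) * Complex.exp (((k : ℝ) * x) * Complex.I) else 0)
      = if j' + k < b then (L:ℂ) * Complex.exp (((k : ℝ) * x) * Complex.I) else 0 := by
    intro j' _
    rw [Finset.sum_ite_eq' (Finset.range b) (j' + k)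
      (fun _ => (L:ℂ) * Complex.exp (((k : ℝ) * x) * Complex.I))]
    simp [Finset.mem_range]
  rw [Finset.sum_congr rfl step4, ← Finset.sum_filter]
  have : (Finset.range b).filter (fun j' => j' + k < b) = Finset.range (b - k) := by
    ext a; simp only [Finset.mem_filter, Finset.mem_range]; omega
  rw [this, Finset.sum_const, Finset.card_range, nsmul_eq_mul]
  ring

noncomputable def Kker (n : ℕ) (t : ℝ) : ℝ :=
  (Complex.normSq (Dker (2*n) t) - Complex.normSq (Dker n t)) / n

lemma fej_grid (L b : ℕ) (hL : 0 < L) (hb : b ≤ L) (x : ℝ) :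
    ∑ l ∈ Finset.range L, (Complex.normSq (Dker b (x - 2 * Real.pi * l / L)) : ℝ)
      = (b : ℝ) * L := by
  have h := gridsum L b 0 hL (by omega) x
  simp only [Nat.cast_zero, Complex.ofReal_zero, zero_mul, Complex.exp_zero, mul_one,
    Nat.sub_zero] at h
  have h2 : ((∑ l ∈ Finset.range L,
      (Complex.normSq (Dker b (x - 2 * Real.pi * l / L)) : ℝ) : ℝ) : ℂ)
      = (((b:ℝ) * L : ℝ) : ℂ) := by
    push_cast
    convert h using 2
  exact_mod_cast h2

lemma reproduceC (n : ℕ) (hn : 1 ≤ n) (k : ℕ) (hk1 : 1 ≤ k) (hkn : k ≤ n) (x : ℝ) :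
    ∑ l ∈ Finset.range (10*n),
      ((Kker n (x - 2 * Real.pi * l / (10*n : ℕ)) : ℝ) : ℂ)
        * Complex.exp (((k : ℝ) * (2 * Real.pi * l / (10*n : ℕ))) * Complex.I)
      = ((10*n : ℕ) : ℂ) * Complex.exp (((k : ℝ) * x) * Complex.I) := by
  have hL : 0 < 10*n := by omega
  have h1 := gridsum (10*n) (2*n) k hL (by omega) x
  have h2 := gridsum (10*n) n k hL (by omega) x
  have hcast : ∀ l : ℕ, ((Kker n (x - 2 * Real.pi * l / (10*n : ℕ)) : ℝ) : ℂ)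
      = (((Complex.normSq (Dker (2*n) (x - 2 * Real.pi * l / (10*n : ℕ))) : ℝ) : ℂ)
        - ((Complex.normSq (Dker n (x - 2 * Real.pi * l / (10*n : ℕ))) : ℝ) : ℂ)) / n := by
    intro l
    unfold Kker
    push_cast
    ring
  calc ∑ l ∈ Finset.range (10*n),
      ((Kker n (x - 2 * Real.pi * l / (10*n : ℕ)) : ℝ) : ℂ)
        * Complex.exp (((k : ℝ) * (2 * Real.pi * l / (10*n : ℕ))) * Complex.I)
      = (1/(n:ℂ)) * ((∑ l ∈ Finset.range (10*n),
          ((Complex.normSq (Dker (2*n) (x - 2 * Real.pi * l / (10*n : ℕ))) : ℝ) : ℂ)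
            * Complex.exp (((k : ℝ) * (2 * Real.pi * l / (10*n : ℕ))) * Complex.I))
        - (∑ l ∈ Finset.range (10*n),
          ((Complex.normSq (Dker n (x - 2 * Real.pi * l / (10*n : ℕ))) : ℝ) : ℂ)
            * Complex.exp (((k : ℝ) * (2 * Real.pi * l / (10*n : ℕ))) * Complex.I))) := by
        rw [← Finset.sum_sub_distrib, Finset.mul_sum]
        refine Finset.sum_congr rfl fun l _ => ?_
        rw [hcast l]
        ring
    _ = ((10*n : ℕ) : ℂ) * Complex.exp (((k : ℝ) * x) * Complex.I) := by
        rw [h1, h2]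
        have hnC : (n : ℂ) ≠ 0 := by exact_mod_cast (by omega : n ≠ 0)
        have e1 : ((2*n - k : ℕ) : ℂ) = 2*(n:ℂ) - k := by
          have : (2*n - k : ℕ) = 2*n - k := rfl
          push_cast [Nat.cast_sub (by omega : k ≤ 2*n)]
          ring
        have e2 : ((n - k : ℕ) : ℂ) = (n:ℂ) - k := by
          push_cast [Nat.cast_sub hkn]
          ring
        rw [e1, e2]
        push_cast
        field_simp
        ring

lemma reproduceR (n : ℕ) (hn : 1 ≤ n) (k : ℕ) (hk1 : 1 ≤ k) (hkn : k ≤ n) (φ : ℝ) (x : ℝ) :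
    ∑ l ∈ Finset.range (10*n),
      Kker n (x - 2 * Real.pi * l / (10*n : ℕ))
        * Real.cos ((k : ℝ) * (2 * Real.pi * l / (10*n : ℕ)) + φ)
      = ((10*n : ℕ) : ℝ) * Real.cos ((k : ℝ) * x + φ) := by
  have hre : ∀ (r θ : ℝ), ((r:ℂ) * Complex.exp ((θ:ℝ) * Complex.I)).re = r * Real.cos θ := by
    intro r θ
    rw [Complex.re_ofReal_mul, Complex.exp_ofReal_mul_I_re]
  have key : ∑ l ∈ Finset.range (10*n),
      ((Kker n (x - 2 * Real.pi * l / (10*n : ℕ)) : ℝ) : ℂ)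
        * Complex.exp ((((k : ℝ) * (2 * Real.pi * l / (10*n : ℕ)) + φ : ℝ)) * Complex.I)
      = ((10*n : ℕ) : ℂ) * Complex.exp ((((k : ℝ) * x + φ : ℝ)) * Complex.I) := by
    have expand : ∀ l : ℕ,
        ((Kker n (x - 2 * Real.pi * l / (10*n : ℕ)) : ℝ) : ℂ)
          * Complex.exp ((((k : ℝ) * (2 * Real.pi * l / (10*n : ℕ)) + φ : ℝ)) * Complex.I)
        = Complex.exp ((φ:ℝ) * Complex.I) *
            (((Kker n (x - 2 * Real.pi * l / (10*n : ℕ)) : ℝ) : ℂ)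
              * Complex.exp (((k : ℝ) * (2 * Real.pi * l / (10*n : ℕ))) * Complex.I)) := by
      intro l
      rw [show ((((k : ℝ) * (2 * Real.pi * l / (10*n : ℕ)) + φ : ℝ)) : ℂ) * Complex.I
            = (φ:ℝ) * Complex.I + (((k : ℝ) * (2 * Real.pi * l / (10*n : ℕ)) : ℝ) : ℂ) * Complex.I
          by push_cast; ring, Complex.exp_add]
      push_cast
      ring_nf
    rw [Finset.sum_congr rfl fun l _ => expand l, ← Finset.mul_sum,
      reproduceC n hn k hk1 hkn x,
      show ((((k : ℝ) * x + φ : ℝ)) : ℂ) * Complex.I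
          = (φ:ℝ) * Complex.I + (((k : ℝ) * x : ℝ) : ℂ) * Complex.I by push_cast; ring,
      Complex.exp_add]
    push_cast
    ring_nf
  have := congrArg Complex.re key
  rw [Complex.re_sum] at this
  simp only [hre] at this
  rw [this, show ((10*n : ℕ) : ℂ) = (((10*n : ℕ) : ℝ) : ℂ) by push_cast; ring, hre]

lemma discret (n : ℕ) (hn : 1 ≤ n) (K : Finset ℕ) (hK : K ⊆ Finset.Icc 1 n)
    (c φ : ℕ → ℝ) (M : ℝ)
    (hM : ∀ l ∈ Finset.range (10*n),
      |∑ k ∈ K, c k * Real.cos ((k:ℝ) * (2 * Real.pi * l / (10*n : ℕ)) + φ k)| ≤ M)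
    (x : ℝ) : |∑ k ∈ K, c k * Real.cos ((k:ℝ) * x + φ k)| ≤ 3 * M := by
  have hL : 0 < 10*n := by omega
  have hLR : (0:ℝ) < ((10*n : ℕ) : ℝ) := by positivity
  have hnR : (0:ℝ) < (n : ℝ) := by positivity
  have key : ((10*n : ℕ) : ℝ) * ∑ k ∈ K, c k * Real.cos ((k:ℝ) * x + φ k)
      = ∑ l ∈ Finset.range (10*n), Kker n (x - 2 * Real.pi * l / (10*n : ℕ))
          * (∑ k ∈ K, c k * Real.cos ((k:ℝ) * (2 * Real.pi * l / (10*n : ℕ)) + φ k)) := by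
    calc ((10*n : ℕ) : ℝ) * ∑ k ∈ K, c k * Real.cos ((k:ℝ) * x + φ k)
        = ∑ k ∈ K, c k * (((10*n : ℕ) : ℝ) * Real.cos ((k:ℝ) * x + φ k)) := by
          rw [Finset.mul_sum]; exact Finset.sum_congr rfl fun k _ => by ring
      _ = ∑ k ∈ K, c k * (∑ l ∈ Finset.range (10*n),
            Kker n (x - 2 * Real.pi * l / (10*n : ℕ))
              * Real.cos ((k:ℝ) * (2 * Real.pi * l / (10*n : ℕ)) + φ k)) := by
          refine Finset.sum_congr rfl fun k hk => ?_
          have hk' := hK hk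
          rw [Finset.mem_Icc] at hk'
          rw [reproduceR n hn k hk'.1 hk'.2 (φ k) x]
      _ = ∑ k ∈ K, ∑ l ∈ Finset.range (10*n), c k *
            (Kker n (x - 2 * Real.pi * l / (10*n : ℕ))
              * Real.cos ((k:ℝ) * (2 * Real.pi * l / (10*n : ℕ)) + φ k)) := by
          exact Finset.sum_congr rfl fun k _ => Finset.mul_sum _ _ _
      _ = ∑ l ∈ Finset.range (10*n), ∑ k ∈ K, c k *
            (Kker n (x - 2 * Real.pi * l / (10*n : ℕ))
              * Real.cos ((k:ℝ) * (2 * Real.pi * l / (10*n : ℕ)) + φ k)) :=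
          Finset.sum_comm
      _ = ∑ l ∈ Finset.range (10*n), Kker n (x - 2 * Real.pi * l / (10*n : ℕ))
          * (∑ k ∈ K, c k * Real.cos ((k:ℝ) * (2 * Real.pi * l / (10*n : ℕ)) + φ k)) := by
          refine Finset.sum_congr rfl fun l _ => ?_
          rw [Finset.mul_sum]
          exact Finset.sum_congr rfl fun k _ => by ring
  have hM0 : 0 ≤ M := le_trans (abs_nonneg _) (hM 0 (Finset.mem_range.mpr hL))
  have hKbd : ∀ l : ℕ, |Kker n (x - 2 * Real.pi * l / (10*n : ℕ))|
      ≤ (Complex.normSq (Dker (2*n) (x - 2 * Real.pi * l / (10*n : ℕ)))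
        + Complex.normSq (Dker n (x - 2 * Real.pi * l / (10*n : ℕ)))) / n := by
    intro l
    unfold Kker
    rw [abs_div, abs_of_pos hnR]
    gcongr
    refine le_trans (abs_sub _ _) ?_
    rw [_root_.abs_of_nonneg (Complex.normSq_nonneg _), _root_.abs_of_nonneg (Complex.normSq_nonneg _)]
  have habs : |((10*n : ℕ) : ℝ) * ∑ k ∈ K, c k * Real.cos ((k:ℝ) * x + φ k)|
      ≤ 3 * M * ((10*n : ℕ) : ℝ) := by
    rw [key]
    refine le_trans (Finset.abs_sum_le_sum_abs _ _) ?_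
    have hterm : ∀ l ∈ Finset.range (10*n),
        |Kker n (x - 2 * Real.pi * l / (10*n : ℕ))
          * (∑ k ∈ K, c k * Real.cos ((k:ℝ) * (2 * Real.pi * l / (10*n : ℕ)) + φ k))|
        ≤ ((Complex.normSq (Dker (2*n) (x - 2 * Real.pi * l / (10*n : ℕ)))
          + Complex.normSq (Dker n (x - 2 * Real.pi * l / (10*n : ℕ)))) / n) * M := by
      intro l hl
      rw [abs_mul]
      exact mul_le_mul (hKbd l) (hM l hl) (abs_nonneg _)
        (div_nonneg (add_nonneg (Complex.normSq_nonneg _) (Complex.normSq_nonneg _)) hnR.le)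
    refine le_trans (Finset.sum_le_sum hterm) (le_of_eq ?_)
    rw [← Finset.sum_mul, ← Finset.sum_div, Finset.sum_add_distrib,
      fej_grid (10*n) (2*n) hL (by omega) x, fej_grid (10*n) n hL (by omega) x]
    push_cast
    field_simp
    ring
  rw [abs_mul, abs_of_pos hLR] at habs
  calc |∑ k ∈ K, c k * Real.cos ((k:ℝ) * x + φ k)|
      ≤ 3 * M := le_of_mul_le_mul_left (by linarith) hLR



/-- Corollary 1, discretization step: assuming Spencer's theorem (for every `N` and
vectors `u 1,…,u R ∈ ℝ^N` with sup-norm at most 1 there are signs `ε` with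
`|∑ ε j • u j|_∞ ≤ C₃ √(R log(2N/R))`), for any `K ⊆ {1,…,n}` with `|K| = r` and a
trigonometric polynomial `∑_{k∈K} d k cos(k x + φ k)` there are signs `σ k = ±1`
with `‖∑ σ k A k‖_∞ ≤ 3 C₃ √(r log((20n+2)/r)) max|d k|` and
`|∑ σ k| ≤ C₃ √(r log((20n+2)/r))`. -/
theorem stmt6 (C₃ : ℝ) (hC₃ : 0 < C₃)
    (hSpencer : ∀ (N R : ℕ), 0 < R → R ≤ N → ∀ u : Fin R → Fin N → ℝ,
      (∀ j i, |u j i| ≤ 1) →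
      ∃ ε : Fin R → ℝ, (∀ j, ε j = 1 ∨ ε j = -1) ∧
        ∀ i, |∑ j, ε j * u j i| ≤ C₃ * Real.sqrt ((R : ℝ) * Real.log (2 * (N : ℝ) / (R : ℝ))))
    (n : ℕ) (hn : 1 ≤ n) (K : Finset ℕ) (hK : K ⊆ Finset.Icc 1 n)
    (r : ℕ) (hr : K.card = r) (hrpos : 0 < r)
    (d φ : ℕ → ℝ) (D : ℝ) (hD : ∀ k ∈ K, |d k| ≤ D) :
    ∃ σ : ℕ → ℝ, (∀ k ∈ K, σ k = 1 ∨ σ k = -1) ∧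
      (∀ x : ℝ,
        |∑ k ∈ K, σ k * (d k * Real.cos ((k : ℝ) * x + φ k))|
          ≤ 3 * C₃ * Real.sqrt ((r : ℝ) * Real.log ((20 * (n : ℝ) + 2) / (r : ℝ))) * D) ∧
      |∑ k ∈ K, σ k| ≤ C₃ * Real.sqrt ((r : ℝ) * Real.log ((20 * (n : ℝ) + 2) / (r : ℝ))) := by
  classical
  have hKne : K.Nonempty := Finset.card_pos.mp (by omega)
  obtain ⟨k₀, hk₀⟩ := hKne
  have hD0 : 0 ≤ D := le_trans (abs_nonneg _) (hD k₀ hk₀)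
  -- enumeration of K
  set e : Fin r → ℕ := fun j => ((K.equivFin.symm (Fin.cast hr.symm j)) : ℕ) with he
  have heK : ∀ j, e j ∈ K := fun j => (K.equivFin.symm (Fin.cast hr.symm j)).2
  have hsum : ∀ f : ℕ → ℝ, ∑ k ∈ K, f k = ∑ j : Fin r, f (e j) := by
    intro f
    calc ∑ k ∈ K, f k = ∑ a : K, f a := (Finset.sum_coe_sort K f).symm
      _ = ∑ i : Fin K.card, f (K.equivFin.symm i) :=
          (Equiv.sum_comp K.equivFin.symm (fun a : K => f a)).symm
      _ = ∑ j : Fin r, f (e j) :=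
          (Equiv.sum_comp (finCongr (hr.symm : r = K.card))
            (fun i => f (K.equivFin.symm i))).symm
  -- scaled coefficients
  set dd : Fin r → ℝ := fun j => if D = 0 then 0 else d (e j) / D with hdddef
  have hdd : ∀ j, |dd j| ≤ 1 := by
    intro j
    by_cases h : D = 0
    · simp [hdddef, h]
    · have hDpos : 0 < D := lt_of_le_of_ne hD0 (Ne.symm h)
      simp only [hdddef, if_neg h, abs_div, abs_of_pos hDpos]
      rw [div_le_one hDpos]
      exact hD _ (heK j)
  have hDdd : ∀ j, D * dd j = d (e j) := by
    intro j
    by_cases h : D = 0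
    · have : |d (e j)| ≤ 0 := h ▸ hD _ (heK j)
      have : d (e j) = 0 := abs_nonpos_iff.mp this
      simp [hdddef, h, this]
    · simp only [hdddef, if_neg h]
      field_simp
  -- vectors for Spencer
  set u : Fin r → Fin (10*n+1) → ℝ := fun j i =>
    if (i:ℕ) < 10*n then
      dd j * Real.cos ((e j : ℝ) * (2 * Real.pi * (i:ℕ) / (10*n : ℕ)) + φ (e j))
    else 1 with hu
  have hub : ∀ j i, |u j i| ≤ 1 := by
    intro j i
    simp only [hu]
    split_ifs with h
    · rw [abs_mul]
      calc |dd j| * |Real.cos _| ≤ 1 * 1 :=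
          mul_le_mul (hdd j) (Real.abs_cos_le_one _) (abs_nonneg _) zero_le_one
        _ = 1 := one_mul 1
    · simp
  have hrN : r ≤ 10*n+1 := by
    have h1 : K.card ≤ (Finset.Icc 1 n).card := Finset.card_le_card hK
    rw [Nat.card_Icc] at h1
    omega
  obtain ⟨ε, hε1, hε2⟩ := hSpencer (10*n+1) r hrpos hrN u hub
  have harg : 2 * (((10*n+1 : ℕ)) : ℝ) / (r : ℝ) = (20 * (n : ℝ) + 2) / (r : ℝ) := by
    push_cast
    ring
  rw [harg] at hε2
  set B : ℝ := C₃ * Real.sqrt ((r : ℝ) * Real.log ((20 * (n : ℝ) + 2) / (r : ℝ))) with hB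
  -- signs
  set σ : ℕ → ℝ := fun k => if hk : k ∈ K then ε (Fin.cast hr (K.equivFin ⟨k, hk⟩)) else 1
    with hσ
  have hσe : ∀ j, σ (e j) = ε j := by
    intro j
    have hj : e j ∈ K := heK j
    simp only [hσ, dif_pos hj]
    congr 1
    have h1 : (⟨e j, hj⟩ : {x // x ∈ K}) = K.equivFin.symm (Fin.cast hr.symm j) :=
      Subtype.ext rfl
    rw [h1, Equiv.apply_symm_apply]
    exact Fin.ext rfl
  refine ⟨σ, ?_, ?_, ?_⟩
  · intro k hk
    simp only [hσ, dif_pos hk]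
    exact hε1 _
  · -- sup-norm bound
    intro x
    have hgrid : ∀ l ∈ Finset.range (10*n),
        |∑ k ∈ K, (σ k * d k) * Real.cos ((k:ℝ) * (2 * Real.pi * l / (10*n : ℕ)) + φ k)|
          ≤ B * D := by
      intro l hl
      rw [Finset.mem_range] at hl
      have hi := hε2 ⟨l, by omega⟩
      have hDB : |∑ k ∈ K, (σ k * d k) * Real.cos ((k:ℝ) * (2 * Real.pi * l / (10*n : ℕ)) + φ k)|
          = D * |∑ j, ε j * u j ⟨l, by omega⟩| := by
        rw [← _root_.abs_of_nonneg hD0, ← abs_mul, Finset.mul_sum]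
        congr 1
        rw [hsum (fun k => (σ k * d k) * Real.cos ((k:ℝ) * (2 * Real.pi * l / (10*n : ℕ)) + φ k))]
        refine Finset.sum_congr rfl fun j _ => ?_
        simp only [hu, hσe j]
        rw [if_pos (show ((⟨l, by omega⟩ : Fin (10*n+1)) : ℕ) < 10*n from hl)]
        rw [← hDdd j]
        ring
      rw [hDB, mul_comm]
      exact mul_le_mul_of_nonneg_right hi hD0
    have := discret n hn K hK (fun k => σ k * d k) φ (B * D) hgrid x
    calc |∑ k ∈ K, σ k * (d k * Real.cos ((k : ℝ) * x + φ k))|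
        = |∑ k ∈ K, (σ k * d k) * Real.cos ((k : ℝ) * x + φ k)| := by
          congr 1
          exact Finset.sum_congr rfl fun k _ => by ring
      _ ≤ 3 * (B * D) := this
      _ = 3 * C₃ * Real.sqrt ((r : ℝ) * Real.log ((20 * (n : ℝ) + 2) / (r : ℝ))) * D := by
          rw [hB]; ring
  · -- sum of signs
    have hi := hε2 ⟨10*n, by omega⟩
    have : ∑ k ∈ K, σ k = ∑ j, ε j * u j ⟨10*n, by omega⟩ := by
      rw [hsum σ]
      refine Finset.sum_congr rfl fun j _ => ?_
      simp only [hu, hσe j]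
      rw [if_neg (by simp)]
      ring
    rw [this]
    exact hi
end

section
/- For any trigonometric polynomial T of degree at most n, ‖T‖_∞ ≤ 3 max_{l=0,…,10n−1} |T(πl/(5n))|. -/
open Finset Complex

noncomputable def E (j : ℤ) (x : ℝ) : ℂ := Complex.exp ((j : ℂ) * (x : ℝ) * Complex.I)
noncomputable def Fe (m : ℕ) (θ : ℝ) : ℝ := Complex.normSq (∑ p ∈ range (m+1), E p θ)
lemma E_mul (j k : ℤ) (x : ℝ) : E j x * E k x = E (j + k) x := by
  simp only [E, ← Complex.exp_add]; push_cast; ring_nf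

lemma E_zero (x : ℝ) : E 0 x = 1 := by simp [E]

lemma E_sub (j : ℤ) (x y : ℝ) : E j (x - y) = E j x * E (-j) y := by
  simp only [E, ← Complex.exp_add]; push_cast; ring_nf

lemma conj_E (j : ℤ) (x : ℝ) : (starRingEnd ℂ) (E j x) = E (-j) x := by
  simp only [E, ← Complex.exp_conj, map_mul, Complex.conj_I, map_intCast, Complex.conj_ofReal]
  push_cast
  ring_nf

lemma orth (N : ℕ) (hN : 0 < N) (m : ℤ) :
    ∑ l ∈ range N, E m (2 * Real.pi * l / N) = if (N : ℤ) ∣ m then (N : ℂ) else 0 := by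
  have hNC : ((N : ℂ)) ≠ 0 := Nat.cast_ne_zero.mpr hN.ne'
  have hterm : ∀ l ∈ range N, E m (2 * Real.pi * l / N)
      = (Complex.exp (2 * Real.pi * Complex.I * m / N)) ^ l := by
    intro l _
    rw [← Complex.exp_nat_mul]
    unfold E
    congr 1
    push_cast
    field_simp
  rw [Finset.sum_congr rfl hterm]
  by_cases h : (N : ℤ) ∣ m
  · obtain ⟨t, rfl⟩ := h
    have h1 : Complex.exp (2 * Real.pi * Complex.I * ((N : ℤ) * t : ℤ) / N) = 1 := by
      have h2 : (2 * (Real.pi : ℂ) * Complex.I * (((N : ℤ) * t : ℤ) : ℂ) / N) = (t : ℤ) * (2 * Real.pi * Complex.I) := by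
        push_cast; field_simp
      rw [h2, Complex.exp_int_mul_two_pi_mul_I]
    rw [if_pos (dvd_mul_right _ _), Finset.sum_congr rfl (fun l _ => by rw [h1, one_pow])]
    simp
  · rw [if_neg h]
    have hz : Complex.exp (2 * Real.pi * Complex.I * m / N) ≠ 1 := by
      intro hc
      obtain ⟨k, hk⟩ := Complex.exp_eq_one_iff.mp hc
      apply h
      refine ⟨k, ?_⟩
      rw [div_eq_iff hNC] at hk
      have hpi : (2 * (Real.pi:ℂ) * Complex.I) ≠ 0 := by
        simp [Real.pi_ne_zero, Complex.I_ne_zero, Complex.ofReal_ne_zero]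
      have h2 : (m:ℂ) * (2 * Real.pi * Complex.I) = ((N:ℂ) * k) * (2 * Real.pi * Complex.I) := by
        linear_combination hk
      have h3 := mul_right_cancel₀ hpi h2
      exact_mod_cast h3
    rw [geom_sum_eq hz]
    have h4 : Complex.exp (2 * Real.pi * Complex.I * m / N) ^ N = 1 := by
      rw [← Complex.exp_nat_mul]
      have h5 : (N : ℂ) * (2 * Real.pi * Complex.I * m / N) = (m : ℤ) * (2 * Real.pi * Complex.I) := by
        push_cast; field_simp
      rw [h5, Complex.exp_int_mul_two_pi_mul_I]
    rw [h4]; simp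

lemma pair_card (m : ℕ) (j : ℤ) (hj : j.natAbs ≤ m) :
    (((range (m+1)) ×ˢ (range (m+1))).filter (fun pq => (pq.1 : ℤ) - pq.2 = j)).card
      = m + 1 - j.natAbs := by
  have himg : ((range (m+1)) ×ˢ (range (m+1))).filter (fun pq => (pq.1 : ℤ) - pq.2 = j)
      = (range (m + 1 - j.natAbs)).image (fun q => (q + j.toNat, q + (-j).toNat)) := by
    ext ⟨p, q⟩
    simp only [mem_filter, mem_product, mem_range, mem_image, Prod.ext_iff]
    constructor
    · rintro ⟨⟨hp, hq⟩, h⟩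
      exact ⟨min p q, by omega, by omega, by omega⟩
    · rintro ⟨a, ha, rfl, rfl⟩
      refine ⟨⟨by omega, by omega⟩, by push_cast; omega⟩
  rw [himg, Finset.card_image_of_injective _ (fun a b h => by
    have := (Prod.ext_iff.mp h).1
    omega), Finset.card_range]
lemma Fe_nonneg (m : ℕ) (θ : ℝ) : 0 ≤ Fe m θ := Complex.normSq_nonneg _

lemma fejer (m : ℕ) (θ : ℝ) :
    ((Fe m θ : ℝ) : ℂ) = ∑ j ∈ Icc (-(m:ℤ)) m, ((m + 1 - j.natAbs : ℕ) : ℂ) * E j θ := by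
  rw [Fe, ← Complex.mul_conj, map_sum]
  have h1 : (∑ p ∈ range (m+1), E (p:ℤ) θ) * (∑ q ∈ range (m+1), (starRingEnd ℂ) (E (q:ℤ) θ))
      = ∑ pq ∈ (range (m+1)) ×ˢ (range (m+1)), E ((pq.1 : ℤ) - pq.2) θ := by
    rw [Finset.sum_mul_sum, ← Finset.sum_product']
    refine Finset.sum_congr rfl fun pq _ => ?_
    rw [conj_E, E_mul, sub_eq_add_neg]
  rw [h1, ← Finset.sum_fiberwise_of_maps_to (g := fun pq => (pq.1 : ℤ) - pq.2)
    (t := Icc (-(m:ℤ)) m) (fun pq hpq => by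
      simp only [mem_product, mem_range] at hpq
      simp only [mem_Icc]
      omega)]
  refine Finset.sum_congr rfl fun j hj => ?_
  have hj' : j.natAbs ≤ m := by simp only [mem_Icc] at hj; omega
  calc ∑ pq ∈ ((range (m+1)) ×ˢ (range (m+1))).filter (fun pq => (pq.1 : ℤ) - pq.2 = j),
        E ((pq.1 : ℤ) - pq.2) θ
      = ∑ pq ∈ ((range (m+1)) ×ˢ (range (m+1))).filter (fun pq => (pq.1 : ℤ) - pq.2 = j),
        E j θ := by
        refine Finset.sum_congr rfl fun pq hpq => ?_
        rw [(Finset.mem_filter.mp hpq).2]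
    _ = ((m + 1 - j.natAbs : ℕ) : ℂ) * E j θ := by
        rw [Finset.sum_const, pair_card m j hj', nsmul_eq_mul]
lemma sampleT (n N : ℕ) (hN : 0 < N) (c : ℤ → ℂ) (m : ℕ) (hm : n + m < N) (x : ℝ) :
    ∑ l ∈ range N, (∑ k ∈ Icc (-(n:ℤ)) n, c k * E k (2*Real.pi*l/N)) * ((Fe m (x - 2*Real.pi*l/N) : ℝ) : ℂ)
      = N * ∑ k ∈ Icc (-(n:ℤ)) n, c k * ((m + 1 - k.natAbs : ℕ) : ℂ) * E k x := by
  calc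
    ∑ l ∈ range N, (∑ k ∈ Icc (-(n:ℤ)) n, c k * E k (2*Real.pi*l/N)) * ((Fe m (x - 2*Real.pi*l/N) : ℝ) : ℂ)
      = ∑ l ∈ range N, ∑ k ∈ Icc (-(n:ℤ)) n, ∑ j ∈ Icc (-(m:ℤ)) m,
        (c k * ((m + 1 - j.natAbs : ℕ) : ℂ) * E j x) * E (k + -j) (2*Real.pi*l/N) := by
      refine Finset.sum_congr rfl fun l _ => ?_
      rw [fejer, Finset.sum_mul_sum]
      refine Finset.sum_congr rfl fun k _ => Finset.sum_congr rfl fun j _ => ?_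
      rw [E_sub, ← E_mul]
      ring
    _ = ∑ k ∈ Icc (-(n:ℤ)) n, ∑ j ∈ Icc (-(m:ℤ)) m,
        (c k * ((m + 1 - j.natAbs : ℕ) : ℂ) * E j x) * ∑ l ∈ range N, E (k + -j) (2*Real.pi*l/N) := by
      rw [Finset.sum_comm]
      refine Finset.sum_congr rfl fun k _ => ?_
      rw [Finset.sum_comm]
      exact Finset.sum_congr rfl fun j _ => by rw [Finset.mul_sum]
    _ = ∑ k ∈ Icc (-(n:ℤ)) n, ∑ j ∈ Icc (-(m:ℤ)) m,
        if j = k then (c k * ((m + 1 - j.natAbs : ℕ) : ℂ) * E j x) * N else 0 := by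
      refine Finset.sum_congr rfl fun k hk => Finset.sum_congr rfl fun j hj => ?_
      rw [orth N hN]
      by_cases h : j = k
      · subst h; simp
      · rw [if_neg h, if_neg, mul_zero]
        intro hdvd
        apply h
        simp only [mem_Icc] at hk hj
        have h0 : k + -j = 0 := Int.eq_zero_of_abs_lt_dvd hdvd (by
          rw [abs_lt]; omega)
        omega
    _ = ∑ k ∈ Icc (-(n:ℤ)) n, (c k * ((m + 1 - k.natAbs : ℕ) : ℂ) * E k x) * N := by
      refine Finset.sum_congr rfl fun k hk => ?_
      rw [Finset.sum_ite_eq' (Icc (-(m:ℤ)) m) k]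
      by_cases h : k ∈ Icc (-(m:ℤ)) m
      · rw [if_pos h]
      · rw [if_neg h]
        have h0 : (m + 1 - k.natAbs : ℕ) = 0 := by
          simp only [mem_Icc] at h hk; omega
        rw [h0]; simp
    _ = N * ∑ k ∈ Icc (-(n:ℤ)) n, c k * ((m + 1 - k.natAbs : ℕ) : ℂ) * E k x := by
      rw [Finset.mul_sum]
      exact Finset.sum_congr rfl fun k _ => by ring
lemma sampleF (N : ℕ) (hN : 0 < N) (m : ℕ) (hm : m < N) (x : ℝ) :
    ∑ l ∈ range N, Fe m (x - 2*Real.pi*l/N) = ((m+1 : ℕ) : ℝ) * N := by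
  have h := sampleT 0 N hN (fun _ => 1) m (by omega) x
  simp only [Nat.cast_zero, neg_zero, Finset.Icc_self, Finset.sum_singleton, one_mul,
    E_zero, mul_one, Int.natAbs_zero, Nat.sub_zero] at h
  have h2 : ((∑ l ∈ range N, Fe m (x - 2*Real.pi*l/N) : ℝ) : ℂ) = (((m+1 : ℕ) : ℝ) * N : ℝ) := by
    push_cast at h ⊢
    rw [h]; ring
  exact_mod_cast h2

/-- Marcinkiewicz–Zygmund type discretization: for any trigonometric polynomial
`T x = ∑_{|k| ≤ n} c k e^{ikx}` of degree at most `n ≥ 1`,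
`‖T‖_∞ ≤ 3 max_{0 ≤ l < 10n} |T(π l/(5n))|`. -/
theorem stmt7 (n : ℕ) (hn : 1 ≤ n) (c : ℤ → ℂ) (M : ℝ)
    (hM : ∀ l ∈ Finset.range (10 * n),
      ‖(∑ k ∈ Finset.Icc (-(n : ℤ)) (n : ℤ),
        c k * Complex.exp ((k : ℂ) * (Real.pi * l / (5 * n) : ℝ) * Complex.I))‖ ≤ M) :
    ∀ x : ℝ,
      ‖(∑ k ∈ Finset.Icc (-(n : ℤ)) (n : ℤ),
        c k * Complex.exp ((k : ℂ) * (x : ℝ) * Complex.I))‖ ≤ 3 * M := by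
  intro x
  have hN : 0 < 10 * n := by omega
  set N : ℕ := 10 * n with hNdef
  set T : ℝ → ℂ := fun t => ∑ k ∈ Icc (-(n:ℤ)) n, c k * E k t with hT
  have hM' : ∀ l ∈ range N, ‖T (2*Real.pi*l/N)‖ ≤ M := by
    intro l hl
    have hx : (2*Real.pi*l/N : ℝ) = Real.pi * l / (5*n) := by
      have hNr : (N:ℝ) = 10*n := by rw [hNdef]; push_cast; ring
      rw [hNr]
      have h5 : (5*(n:ℝ)) ≠ 0 := by positivity
      field_simp
      ring
    rw [hx]
    exact hM l hl
  have hM0 : 0 ≤ M := le_trans (norm_nonneg _) (hM' 0 (by simp [hN]))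
  -- key identity
  have h1 := sampleT n N hN c (2*n-1) (by omega) x
  have h2 := sampleT n N hN c (n-1) (by omega) x
  rw [show (2*n-1)+1 = 2*n by omega] at h1
  rw [show (n-1)+1 = n by omega] at h2
  have key : ∑ l ∈ range N, T (2*Real.pi*l/N)
        * ((Fe (2*n-1) (x - 2*Real.pi*l/N) - Fe (n-1) (x - 2*Real.pi*l/N) : ℝ) : ℂ)
      = ((N : ℂ) * n) * T x := by
    have lhs_eq : ∑ l ∈ range N, T (2*Real.pi*l/N)
          * ((Fe (2*n-1) (x - 2*Real.pi*l/N) - Fe (n-1) (x - 2*Real.pi*l/N) : ℝ) : ℂ)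
        = (∑ l ∈ range N, T (2*Real.pi*l/N) * ((Fe (2*n-1) (x - 2*Real.pi*l/N) : ℝ) : ℂ))
          - ∑ l ∈ range N, T (2*Real.pi*l/N) * ((Fe (n-1) (x - 2*Real.pi*l/N) : ℝ) : ℂ) := by
      rw [← Finset.sum_sub_distrib]
      refine Finset.sum_congr rfl fun l _ => ?_
      push_cast
      ring
    rw [lhs_eq, hT, h1, h2, ← mul_sub, ← Finset.sum_sub_distrib]
    have hsum : ∀ k ∈ Icc (-(n:ℤ)) n,
        c k * ((2*n - k.natAbs : ℕ) : ℂ) * E k x - c k * ((n - k.natAbs : ℕ) : ℂ) * E k x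
          = (n : ℂ) * (c k * E k x) := by
      intro k hk
      have hk' : k.natAbs ≤ n := by simp only [mem_Icc] at hk; omega
      rw [Nat.cast_sub (by omega), Nat.cast_sub hk']
      push_cast
      ring
    rw [Finset.sum_congr rfl hsum, ← Finset.mul_sum]
    ring
  -- bounding
  have bound : ‖((N : ℂ) * n) * T x‖ ≤ M * (3 * n * N) := by
    rw [← key]
    calc ‖∑ l ∈ range N, T (2*Real.pi*l/N)
          * ((Fe (2*n-1) (x - 2*Real.pi*l/N) - Fe (n-1) (x - 2*Real.pi*l/N) : ℝ) : ℂ)‖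
        ≤ ∑ l ∈ range N, ‖T (2*Real.pi*l/N)
          * ((Fe (2*n-1) (x - 2*Real.pi*l/N) - Fe (n-1) (x - 2*Real.pi*l/N) : ℝ) : ℂ)‖ :=
        norm_sum_le _ _
      _ ≤ ∑ l ∈ range N, M * (Fe (2*n-1) (x - 2*Real.pi*l/N) + Fe (n-1) (x - 2*Real.pi*l/N)) := by
        refine Finset.sum_le_sum fun l hl => ?_
        rw [norm_mul, Complex.norm_real, Real.norm_eq_abs]
        have habs : |Fe (2*n-1) (x - 2*Real.pi*l/N) - Fe (n-1) (x - 2*Real.pi*l/N)|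
            ≤ Fe (2*n-1) (x - 2*Real.pi*l/N) + Fe (n-1) (x - 2*Real.pi*l/N) := by
          rw [abs_le]
          constructor <;>
            nlinarith [Fe_nonneg (2*n-1) (x - 2*Real.pi*l/N), Fe_nonneg (n-1) (x - 2*Real.pi*l/N)]
        exact mul_le_mul (hM' l hl) habs (abs_nonneg _) hM0
      _ = M * (3 * n * N) := by
        rw [← Finset.mul_sum, Finset.sum_add_distrib, sampleF N hN (2*n-1) (by omega) x,
          sampleF N hN (n-1) (by omega) x,
          show (2*n-1)+1 = 2*n by omega, show (n-1)+1 = n by omega]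
        push_cast
        ring
  -- conclude
  have habsT : ‖((N : ℂ) * n) * T x‖ = (N * n : ℝ) * ‖T x‖ := by
    rw [norm_mul, norm_mul, Complex.norm_natCast, Complex.norm_natCast]
  rw [habsT] at bound
  have hpos : (0:ℝ) < N * n := by positivity
  have hfinal : ‖T x‖ ≤ 3 * M := by
    nlinarith [norm_nonneg (T x)]
  exact hfinal
end

section
/- Let f : ℝ/2πℤ → ℂ be continuous with Fourier series Σ_k A_k, and suppose that for a sequence of finite sets L₁ ⊆ L₂ ⊆ … ⊆ ℕ one has ‖f − d₀ − Σ_{k∈L_λ} A_k‖_∞ → 0 as λ → ∞, and moreover for each λ there is an ordering σ_λ of L_{λ+1} \ L_λ such that every partial sum along σ_λ of Σ_{k∈L_{λ+1}\L_λ} A_k has sup norm at most ε_λ + ‖Σ_{k∈L_{λ+1}\L_λ} A_k‖ with ε_λ → 0. Then there is a bijection σ : ℕ → ℕ (enumerating the L_λ in blocks) such that ‖f − d₀ − Σ_{j=1}^m A_{σ(j)}‖_∞ → 0 as m → ∞. -/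
open Filter

lemma exists_bijOn_Icc_card (s : Finset ℕ) :
    ∃ τ : ℕ → ℕ, Set.BijOn τ (Set.Icc 1 s.card) (s : Set ℕ) := by
  classical
  refine ⟨fun j => if h : j - 1 < s.card then (s.equivFin.symm ⟨j - 1, h⟩ : ℕ) else 0, ?_, ?_, ?_⟩
  · intro j hj
    simp only [Set.mem_Icc] at hj
    have h : j - 1 < s.card := by omega
    simp only [dif_pos h]
    exact (s.equivFin.symm ⟨j - 1, h⟩).2
  · intro j₁ h₁ j₂ h₂ heq
    simp only [Set.mem_Icc] at h₁ h₂
    have hh₁ : j₁ - 1 < s.card := by omega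
    have hh₂ : j₂ - 1 < s.card := by omega
    simp only [dif_pos hh₁, dif_pos hh₂] at heq
    have h2 := s.equivFin.symm.injective (Subtype.ext heq)
    have h3 : j₁ - 1 = j₂ - 1 := congrArg Fin.val h2
    omega
  · intro k hk
    have hk' : k ∈ s := hk
    have hlt : (s.equivFin ⟨k, hk'⟩ : ℕ) < s.card := (s.equivFin ⟨k, hk'⟩).2
    refine ⟨(s.equivFin ⟨k, hk'⟩ : ℕ) + 1, ?_, ?_⟩
    · exact Set.mem_Icc.2 ⟨Nat.le_add_left 1 _, Nat.succ_le_of_lt hlt⟩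
    · have h : (s.equivFin ⟨k, hk'⟩ : ℕ) + 1 - 1 < s.card := by simpa using hlt
      simp only [dif_pos h]
      have he : (⟨(s.equivFin ⟨k, hk'⟩ : ℕ) + 1 - 1, h⟩ : Fin s.card) = s.equivFin ⟨k, hk'⟩ := by
        ext; simp
      rw [he, Equiv.symm_apply_apply]

/-- Gluing step in the proof of Theorem 4: if `‖f - d₀ - ∑_{k∈L λ} A k‖_∞ → 0` along an
increasing exhausting sequence of finite index sets `L λ`, and each block
`L (λ+1) \ L λ` admits an ordering all of whose partial sums have sup norm at most
`ε λ + ‖∑_{block} A k‖` with `ε λ → 0`, then there is a bijection `σ` of the index set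
(enumerating the `L λ` in blocks) with `‖f - d₀ - ∑_{j=1}^m A (σ j)‖_∞ → 0`. -/
theorem stmt12 (f : ℝ → ℂ) (hf : Continuous f) (hper : ∀ x, f (x + 2 * Real.pi) = f x)
    (d₀ : ℂ) (d φ : ℕ → ℝ)
    (L : ℕ → Finset ℕ) (hmono : ∀ lam, L lam ⊆ L (lam + 1))
    (hpos : ∀ lam, ∀ k ∈ L lam, 1 ≤ k) (hexh : ∀ k, 1 ≤ k → ∃ lam, k ∈ L lam)
    (δ : ℕ → ℝ) (hδ : Tendsto δ atTop (nhds 0))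
    (hconv : ∀ lam, ∀ x : ℝ,
      ‖f x - d₀ -
        ∑ k ∈ L lam, ((d k * Real.cos ((k : ℝ) * x + φ k) : ℝ) : ℂ)‖ ≤ δ lam)
    (ε : ℕ → ℝ) (hε : Tendsto ε atTop (nhds 0))
    (hblock : ∀ lam, ∃ τ : ℕ → ℕ,
      Set.BijOn τ (Set.Icc 1 ((L (lam + 1) \ L lam).card))
        ((L (lam + 1) \ L lam : Finset ℕ) : Set ℕ) ∧
      ∀ m, m ≤ (L (lam + 1) \ L lam).card → ∀ x : ℝ,
        |∑ j ∈ Finset.Icc 1 m, d (τ j) * Real.cos ((τ j : ℝ) * x + φ (τ j))|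
          ≤ ε lam +
            ⨆ y : ℝ, |∑ k ∈ L (lam + 1) \ L lam,
              d k * Real.cos ((k : ℝ) * y + φ k)|) :
    ∃ σ : ℕ → ℕ, Set.BijOn σ {k : ℕ | 1 ≤ k} {k : ℕ | 1 ≤ k} ∧
      (∀ lam, σ '' Set.Icc 1 (L lam).card = (L lam : Set ℕ)) ∧
      Tendsto (fun m : ℕ =>
          ⨆ x : ℝ, ‖f x - d₀ -
            ∑ j ∈ Finset.Icc 1 m,
              ((d (σ j) * Real.cos ((σ j : ℝ) * x + φ (σ j)) : ℝ) : ℂ)‖)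
        atTop (nhds 0) := by
  classical
  choose τ hτbij hτbound using hblock
  obtain ⟨τ₀, hτ₀⟩ := exists_bijOn_Icc_card (L 0)
  set c : ℕ → ℕ := fun lam => (L lam).card with hc
  -- monotonicity of L
  have hLmono : ∀ {a b : ℕ}, a ≤ b → L a ⊆ L b := by
    intro a b hab
    induction b with
    | zero =>
      have : a = 0 := Nat.le_zero.1 hab
      subst this; exact subset_rfl
    | succ n ih =>
      rcases Nat.lt_or_ge a (n+1) with h | h
      · exact (ih (by omega)).trans (hmono n)
      · have : a = n + 1 := by omega
        subst this; exact subset_rfl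
  have hcmono : Monotone c := fun a b hab => Finset.card_le_card (hLmono hab)
  have hcard : ∀ l, (L (l+1) \ L l).card = c (l+1) - c l := by
    intro l; exact Finset.card_sdiff_of_subset (hmono l)
  -- c is unbounded
  have hex : ∀ j : ℕ, ∃ lam, j ≤ c lam := by
    intro n
    choose F hF using fun k (hk : k ∈ Finset.Icc 1 n) => hexh k (Finset.mem_Icc.1 hk).1
    set G : ℕ → ℕ := fun k => if hk : k ∈ Finset.Icc 1 n then F k hk else 0 with hG
    set M : ℕ := (Finset.Icc 1 n).sup G with hM
    refine ⟨M, ?_⟩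
    have hsub : Finset.Icc 1 n ⊆ L M := by
      intro k hk
      refine hLmono ?_ (hF k hk)
      calc F k hk = G k := by rw [hG]; simp only [dif_pos hk]
        _ ≤ M := Finset.le_sup hk
    calc n = (Finset.Icc 1 n).card := by simp
      _ ≤ _ := Finset.card_le_card hsub
  set B : ℕ → ℕ := fun j => Nat.find (hex j) with hB
  have hBle : ∀ j, j ≤ c (B j) := fun j => Nat.find_spec (hex j)
  have hBmin : ∀ j l, l < B j → c l < j := fun j l hl =>
    lt_of_not_ge (Nat.find_min (hex j) hl)
  have hBeq : ∀ j l, c l < j → j ≤ c (l+1) → B j = l + 1 := by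
    intro j l h1 h2
    have hle : B j ≤ l + 1 := Nat.find_le h2
    have hgt : l < B j := by
      by_contra h
      exact absurd (hBle j) (not_le.2 (lt_of_le_of_lt (hcmono (not_lt.1 h)) h1))
    omega
  set σ : ℕ → ℕ := fun j =>
    if B j = 0 then τ₀ j else τ (B j - 1) (j - c (B j - 1)) with hσ
  -- behavior of σ
  have hσ0 : ∀ j, j ≤ c 0 → σ j = τ₀ j := by
    intro j hj
    have : B j = 0 := Nat.le_zero.1 (Nat.find_le hj)
    simp [hσ, this]
  have hσb : ∀ l j, c l < j → j ≤ c (l+1) → σ j = τ l (j - c l) := by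
    intro l j h1 h2
    have hb := hBeq j l h1 h2
    simp [hσ, hb]
  -- membership facts
  have hmem0 : ∀ j, 1 ≤ j → B j = 0 → σ j ∈ L 0 := by
    intro j h1 hb
    have hj : j ≤ c 0 := by have := hBle j; rwa [hb] at this
    rw [hσ0 j hj]
    exact hτ₀.mapsTo (Set.mem_Icc.2 ⟨h1, hj⟩)
  have hmemb : ∀ j l, B j = l + 1 → σ j ∈ L (l+1) \ L l := by
    intro j l hb
    have h1 : c l < j := hBmin j l (by omega)
    have h2 : j ≤ c (l+1) := by have := hBle j; rwa [hb] at this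
    rw [hσb l j h1 h2]
    have hm : j - c l ∈ Set.Icc 1 ((L (l+1) \ L l).card) := by
      rw [hcard l]; exact Set.mem_Icc.2 ⟨by omega, by omega⟩
    exact (hτbij l).mapsTo hm
  have hmemL : ∀ j, 1 ≤ j → σ j ∈ L (B j) := by
    intro j h1
    cases hb : B j with
    | zero => exact hmem0 j h1 hb
    | succ l => exact (Finset.mem_sdiff.1 (hmemb j l hb)).1
  -- image of each block
  have himgblock : ∀ l, σ '' Set.Ioc (c l) (c (l+1)) = ((L (l+1) \ L l : Finset ℕ) : Set ℕ) := by
    intro l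
    apply Set.Subset.antisymm
    · rintro _ ⟨j, hj, rfl⟩
      obtain ⟨h1, h2⟩ := Set.mem_Ioc.1 hj
      rw [hσb l j h1 h2]
      exact (hτbij l).mapsTo (Set.mem_Icc.2 ⟨by omega, by rw [hcard l]; omega⟩)
    · intro k hk
      obtain ⟨i, hi, hik⟩ := (hτbij l).surjOn hk
      rw [Set.mem_Icc, hcard l] at hi
      have hcc : c l ≤ c (l+1) := hcmono (Nat.le_succ l)
      refine ⟨i + c l, Set.mem_Ioc.2 ⟨by omega, by omega⟩, ?_⟩
      rw [hσb l (i + c l) (by omega) (by omega), Nat.add_sub_cancel]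
      exact hik
  have hIccIoc : ∀ n : ℕ, Set.Icc 1 n = Set.Ioc 0 n := by
    intro n; ext j; simp only [Set.mem_Icc, Set.mem_Ioc]; omega
  -- image of initial segments
  have himg : ∀ lam, σ '' Set.Icc 1 (c lam) = (L lam : Set ℕ) := by
    intro lam
    induction lam with
    | zero =>
      rw [Set.image_congr (fun j hj => hσ0 j (Set.mem_Icc.1 hj).2)]
      exact hτ₀.image_eq
    | succ l ih =>
      rw [hIccIoc, ← Set.Ioc_union_Ioc_eq_Ioc (Nat.zero_le (c l)) (hcmono (Nat.le_succ l)),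
        Set.image_union, ← hIccIoc, ih, himgblock l, ← Finset.coe_union,
        Finset.union_sdiff_of_subset (hmono l)]
  -- injectivity
  have hne : ∀ j₁ j₂, 1 ≤ j₁ → B j₁ < B j₂ → σ j₁ ≠ σ j₂ := by
    intro j₁ j₂ h1 hlt heq
    obtain ⟨l, hl⟩ : ∃ l, B j₂ = l + 1 := ⟨B j₂ - 1, by omega⟩
    have hm2 := Finset.mem_sdiff.1 (hmemb j₂ l hl)
    have hm1 : σ j₁ ∈ L l := hLmono (by omega : B j₁ ≤ l) (hmemL j₁ h1)
    rw [heq] at hm1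
    exact hm2.2 hm1
  have hinj : Set.InjOn σ {k : ℕ | 1 ≤ k} := by
    intro j₁ h₁ j₂ h₂ heq
    have h₁' : 1 ≤ j₁ := h₁
    have h₂' : 1 ≤ j₂ := h₂
    rcases lt_trichotomy (B j₁) (B j₂) with h | h | h
    · exact absurd heq (hne j₁ j₂ h₁' h)
    · cases hb : B j₁ with
      | zero =>
        have hb2 : B j₂ = 0 := by omega
        have hj1 : j₁ ≤ c 0 := by have := hBle j₁; rwa [hb] at this
        have hj2 : j₂ ≤ c 0 := by have := hBle j₂; rwa [hb2] at this
        rw [hσ0 j₁ hj1, hσ0 j₂ hj2] at heq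
        exact hτ₀.injOn (Set.mem_Icc.2 ⟨h₁', hj1⟩) (Set.mem_Icc.2 ⟨h₂', hj2⟩) heq
      | succ l =>
        have hb2 : B j₂ = l + 1 := by omega
        have ha1 : c l < j₁ := hBmin j₁ l (by omega)
        have ha2 : j₁ ≤ c (l+1) := by have := hBle j₁; rwa [hb] at this
        have hb1 : c l < j₂ := hBmin j₂ l (by omega)
        have hb2' : j₂ ≤ c (l+1) := by have := hBle j₂; rwa [hb2] at this
        rw [hσb l j₁ ha1 ha2, hσb l j₂ hb1 hb2'] at heq
        have := (hτbij l).injOn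
          (Set.mem_Icc.2 ⟨by omega, by rw [hcard l]; omega⟩)
          (Set.mem_Icc.2 ⟨by omega, by rw [hcard l]; omega⟩) heq
        omega
    · exact absurd heq.symm (hne j₂ j₁ h₂' h)
  -- bijection on initial segments
  have hBijIcc : ∀ lam, Set.BijOn σ (Set.Icc 1 (c lam)) (L lam : Set ℕ) := by
    intro lam
    refine ⟨?_, hinj.mono ?_, ?_⟩
    · intro j hj; rw [← himg lam]; exact Set.mem_image_of_mem σ hj
    · intro j hj; exact (Set.mem_Icc.1 hj).1
    · rw [Set.SurjOn, himg lam]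
  -- reindexing the sum over an initial segment
  have hsumL : ∀ lam (g : ℕ → ℂ),
      ∑ j ∈ Finset.Icc 1 (c lam), g (σ j) = ∑ k ∈ L lam, g k := by
    intro lam g
    refine Finset.sum_bij (fun j _ => σ j) ?_ ?_ ?_ ?_
    · intro a ha
      exact (hBijIcc lam).mapsTo (Set.mem_Icc.2 (Finset.mem_Icc.1 ha))
    · intro a₁ ha₁ a₂ ha₂ h
      exact (hBijIcc lam).injOn (Set.mem_Icc.2 (Finset.mem_Icc.1 ha₁))
        (Set.mem_Icc.2 (Finset.mem_Icc.1 ha₂)) h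
    · intro b hb
      obtain ⟨a, ha, rfl⟩ := (hBijIcc lam).surjOn (Finset.mem_coe.2 hb)
      exact ⟨a, Finset.mem_Icc.2 (Set.mem_Icc.1 ha), rfl⟩
    · intro a ha; rfl
  -- reindexing the tail sum within a block
  have hshift : ∀ l m, c l < m → m ≤ c (l+1) → ∀ (g : ℕ → ℝ),
      ∑ j ∈ Finset.Ioc (c l) m, g (σ j) = ∑ i ∈ Finset.Icc 1 (m - c l), g (τ l i) := by
    intro l m h1 h2 g
    refine Finset.sum_bij (fun j _ => j - c l) ?_ ?_ ?_ ?_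
    · intro a ha
      have h' := Finset.mem_Ioc.1 ha
      exact Finset.mem_Icc.2 ⟨by omega, by omega⟩
    · intro a₁ ha₁ a₂ ha₂ h
      have h1' := Finset.mem_Ioc.1 ha₁
      have h2' := Finset.mem_Ioc.1 ha₂
      omega
    · intro b hb
      have h' := Finset.mem_Icc.1 hb
      exact ⟨b + c l, Finset.mem_Ioc.2 ⟨by omega, by omega⟩, by omega⟩
    · intro a ha
      have ha' := Finset.mem_Ioc.1 ha
      rw [hσb l a ha'.1 (le_trans ha'.2 h2)]
  -- sup of block sums is small
  have hsup : ∀ l, (⨆ y : ℝ, |∑ k ∈ L (l+1) \ L l, d k * Real.cos ((k : ℝ) * y + φ k)|)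
      ≤ δ l + δ (l+1) := by
    intro l
    refine ciSup_le fun y => ?_
    have h1 := hconv l y
    have h2 := hconv (l+1) y
    have hs := Finset.sum_sdiff (hmono l)
      (f := fun k => ((d k * Real.cos ((k : ℝ) * y + φ k) : ℝ) : ℂ))
    have key : ((∑ k ∈ L (l+1) \ L l, d k * Real.cos ((k : ℝ) * y + φ k) : ℝ) : ℂ)
        = (f y - d₀ - ∑ k ∈ L l, ((d k * Real.cos ((k : ℝ) * y + φ k) : ℝ) : ℂ))
          - (f y - d₀ - ∑ k ∈ L (l+1), ((d k * Real.cos ((k : ℝ) * y + φ k) : ℝ) : ℂ)) := by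
      push_cast at hs ⊢
      linear_combination hs
    calc |∑ k ∈ L (l+1) \ L l, d k * Real.cos ((k : ℝ) * y + φ k)|
        = ‖(((∑ k ∈ L (l+1) \ L l, d k * Real.cos ((k : ℝ) * y + φ k) : ℝ) : ℂ))‖ := by
          rw [Complex.norm_real, Real.norm_eq_abs]
      _ ≤ _ := by
          rw [key]
          refine le_trans (norm_sub_le_norm_sub_add_norm_sub _ 0 _) ?_
          simp only [sub_zero, zero_sub, norm_neg]
          exact add_le_add h1 h2
  have hFinIccIoc : ∀ n : ℕ, Finset.Icc 1 n = Finset.Ioc 0 n := by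
    intro n; ext j; simp only [Finset.mem_Icc, Finset.mem_Ioc]; omega
  -- pointwise bound for partial sums within a block
  have hpt : ∀ l m, c l < m → m ≤ c (l+1) → ∀ x : ℝ,
      ‖f x - d₀ - ∑ j ∈ Finset.Icc 1 m,
          ((d (σ j) * Real.cos ((σ j : ℝ) * x + φ (σ j)) : ℝ) : ℂ)‖
        ≤ δ l + (ε l + (δ l + δ (l+1))) := by
    intro l m h1 h2 x
    have hsplit : ∑ j ∈ Finset.Icc 1 m, ((d (σ j) * Real.cos ((σ j : ℝ) * x + φ (σ j)) : ℝ) : ℂ)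
        = (∑ j ∈ Finset.Icc 1 (c l), ((d (σ j) * Real.cos ((σ j : ℝ) * x + φ (σ j)) : ℝ) : ℂ))
          + ∑ j ∈ Finset.Ioc (c l) m, ((d (σ j) * Real.cos ((σ j : ℝ) * x + φ (σ j)) : ℝ) : ℂ) := by
      rw [hFinIccIoc m, hFinIccIoc (c l)]
      exact (Finset.sum_Ioc_consecutive _ (Nat.zero_le _) (le_of_lt h1)).symm
    have htail : (∑ j ∈ Finset.Ioc (c l) m, ((d (σ j) * Real.cos ((σ j : ℝ) * x + φ (σ j)) : ℝ) : ℂ))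
        = ((∑ i ∈ Finset.Icc 1 (m - c l),
            d (τ l i) * Real.cos ((τ l i : ℝ) * x + φ (τ l i)) : ℝ) : ℂ) := by
      push_cast
      exact_mod_cast congrArg (Complex.ofReal)
        (hshift l m h1 h2 (fun k => d k * Real.cos ((k : ℝ) * x + φ k)))
    have htb : |∑ i ∈ Finset.Icc 1 (m - c l),
          d (τ l i) * Real.cos ((τ l i : ℝ) * x + φ (τ l i))|
        ≤ ε l + (δ l + δ (l+1)) := by
      refine le_trans (hτbound l (m - c l) (by rw [hcard l]; omega) x) ?_
      exact add_le_add le_rfl (hsup l)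
    calc ‖f x - d₀ - ∑ j ∈ Finset.Icc 1 m,
          ((d (σ j) * Real.cos ((σ j : ℝ) * x + φ (σ j)) : ℝ) : ℂ)‖
        = ‖(f x - d₀ - ∑ k ∈ L l, ((d k * Real.cos ((k : ℝ) * x + φ k) : ℝ) : ℂ))
          - ((∑ i ∈ Finset.Icc 1 (m - c l),
              d (τ l i) * Real.cos ((τ l i : ℝ) * x + φ (τ l i)) : ℝ) : ℂ)‖ := by
          rw [hsplit, htail, hsumL l (fun k => ((d k * Real.cos ((k : ℝ) * x + φ k) : ℝ) : ℂ))]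
          congr 1; ring
      _ ≤ ‖f x - d₀ - ∑ k ∈ L l, ((d k * Real.cos ((k : ℝ) * x + φ k) : ℝ) : ℂ)‖
          + ‖(((∑ i ∈ Finset.Icc 1 (m - c l),
              d (τ l i) * Real.cos ((τ l i : ℝ) * x + φ (τ l i)) : ℝ) : ℂ))‖ := by
          refine le_trans (norm_sub_le_norm_sub_add_norm_sub _ 0 _) ?_
          simp only [sub_zero, zero_sub, norm_neg, le_refl]
      _ ≤ δ l + (ε l + (δ l + δ (l+1))) := by
          refine add_le_add (hconv l x) ?_
          rw [Complex.norm_real, Real.norm_eq_abs]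
          exact htb
  refine ⟨σ, ⟨?_, hinj, ?_⟩, himg, ?_⟩
  · -- maps {k ≥ 1} to {k ≥ 1}
    intro j hj
    exact hpos (B j) (σ j) (hmemL j hj)
  · -- surjective onto {k ≥ 1}
    intro k hk
    obtain ⟨lam, hlam⟩ := hexh k hk
    have : k ∈ (L lam : Set ℕ) := hlam
    rw [← himg lam] at this
    obtain ⟨j, hj, rfl⟩ := this
    exact ⟨j, (Set.mem_Icc.1 hj).1, rfl⟩
  · -- convergence
    rw [Metric.tendsto_atTop]
    intro e he
    rw [Metric.tendsto_atTop] at hδ hε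
    obtain ⟨Λ₁, hΛ₁⟩ := hδ (e/4) (by positivity)
    obtain ⟨Λ₂, hΛ₂⟩ := hε (e/4) (by positivity)
    refine ⟨c (max Λ₁ Λ₂) + 1, fun m hm => ?_⟩
    set Λ := max Λ₁ Λ₂ with hΛ
    have hBm : Λ < B m := by
      by_contra h
      have h1 : c (B m) ≤ c Λ := hcmono (not_lt.1 h)
      have h2 := hBle m
      omega
    obtain ⟨l, hl⟩ : ∃ l, B m = l + 1 := ⟨B m - 1, by omega⟩
    have hll : Λ ≤ l := by omega
    have h1 : c l < m := hBmin m l (by omega)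
    have h2 : m ≤ c (l+1) := by have := hBle m; rwa [hl] at this
    have hg : (⨆ x : ℝ, ‖f x - d₀ - ∑ j ∈ Finset.Icc 1 m,
          ((d (σ j) * Real.cos ((σ j : ℝ) * x + φ (σ j)) : ℝ) : ℂ)‖)
        ≤ δ l + (ε l + (δ l + δ (l+1))) := ciSup_le (hpt l m h1 h2)
    have hg0 : (0:ℝ) ≤ ⨆ x : ℝ, ‖f x - d₀ - ∑ j ∈ Finset.Icc 1 m,
          ((d (σ j) * Real.cos ((σ j : ℝ) * x + φ (σ j)) : ℝ) : ℂ)‖ :=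
      Real.iSup_nonneg fun x => norm_nonneg _
    rw [Real.dist_eq, sub_zero, abs_of_nonneg hg0]
    have d1 : |δ l| < e/4 := by
      have := hΛ₁ l (le_trans (le_max_left _ _) hll)
      rwa [Real.dist_eq, sub_zero] at this
    have d2 : |δ (l+1)| < e/4 := by
      have := hΛ₁ (l+1) (by omega)
      rwa [Real.dist_eq, sub_zero] at this
    have d3 : |ε l| < e/4 := by
      have := hΛ₂ l (le_trans (le_max_right _ _) hll)
      rwa [Real.dist_eq, sub_zero] at this
    have e1 : δ l ≤ |δ l| := le_abs_self _
    have e2 : δ (l+1) ≤ |δ (l+1)| := le_abs_self _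
    have e3 : ε l ≤ |ε l| := le_abs_self _
    calc (⨆ x : ℝ, ‖f x - d₀ - ∑ j ∈ Finset.Icc 1 m,
          ((d (σ j) * Real.cos ((σ j : ℝ) * x + φ (σ j)) : ℝ) : ℂ)‖)
        ≤ δ l + (ε l + (δ l + δ (l+1))) := hg
      _ < e := by linarith
end
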